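/- Let Δ be a discrete formula and δ be an instance with δ ⊨ Δ, and let ∀δ·Δ be the complete reason for this decision. Then for every instance δ*: δ* satisfies ∀δ·Δ if and only if δ* is congruent to δ, i.e., if and only if the common characteristics δ ∩ δ* (the conjunction of the states shared by δ and δ*) imply Δ. -/

import Mathlib

/-- A discrete formula over variables `V`, where variable `v` has states `σ v`. -/
inductive DForm (V : Type) (σ : V → Type) : Type where
  | top : DForm V σ
  | bot : DForm V σ
  | state : (v : V) → σ v → DForm V σ
  | neg : DForm V σ → DForm V σ
  | conj : DForm V σ → DForm V σ → DForm V σ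
  | disj : DForm V σ → DForm V σ → DForm V σ

namespace DForm

variable {V : Type} {σ : V → Type}

/-- Evaluation of a discrete formula in a world `w`. -/
def eval [∀ v, DecidableEq (σ v)] (w : ∀ v, σ v) : DForm V σ → Bool
  | top => true
  | bot => false
  | state v s => decide (w v = s)
  | neg φ => !(φ.eval w)
  | conj φ ψ => φ.eval w && ψ.eval w
  | disj φ ψ => φ.eval w || ψ.eval w

/-- Two formulas are equivalent when they have the same models. -/
def equiv [∀ v, DecidableEq (σ v)] (φ ψ : DForm V σ) : Prop :=
  ∀ w : ∀ v, σ v, φ.eval w = ψ.eval w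

/-- `φ ⊨ ψ`: every model of `φ` is a model of `ψ`. -/
def entails [∀ v, DecidableEq (σ v)] (φ ψ : DForm V σ) : Prop :=
  ∀ w : ∀ v, σ v, φ.eval w = true → ψ.eval w = true

/-- Conditioning `Δ|x_i`: replace occurrences of `x_i` by `⊤` and of `x_j` (`j ≠ i`) by `⊥`. -/
def cond [DecidableEq V] [∀ v, DecidableEq (σ v)] (v : V) (s : σ v) :
    DForm V σ → DForm V σ
  | top => top
  | bot => bot
  | state u t =>
      if h : u = v then (if h ▸ t = s then top else bot) else state u t
  | neg φ => neg (φ.cond v s)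
  | conj φ ψ => conj (φ.cond v s) (ψ.cond v s)
  | disj φ ψ => disj (φ.cond v s) (ψ.cond v s)

/-- Universal quantification of state `x_i`:
`∀x_i·Δ := (Δ|x_i) ∧ ⋀_{j≠i} (x_i ∨ Δ|x_j)`. -/
noncomputable def quant [DecidableEq V] [∀ v, DecidableEq (σ v)] [∀ v, Fintype (σ v)]
    (v : V) (s : σ v) (Δ : DForm V σ) : DForm V σ :=
  ((Finset.univ.filter (fun j => j ≠ s)).toList).foldr
    (fun j acc => conj (disj (state v s) (Δ.cond v j)) acc) (Δ.cond v s)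

/-- The set of variables occurring in a formula. -/
def vars : DForm V σ → Set V
  | top => ∅
  | bot => ∅
  | state u _ => {u}
  | neg φ => φ.vars
  | conj φ ψ => φ.vars ∪ ψ.vars
  | disj φ ψ => φ.vars ∪ ψ.vars

/-- Whether state `x_i` (the positive literal) occurs in the formula. -/
def stateOccurs (v : V) (s : σ v) : DForm V σ → Prop
  | top => False
  | bot => False
  | state u t => ∃ h : u = v, h ▸ t = s
  | neg φ => φ.stateOccurs v s
  | conj φ ψ => φ.stateOccurs v s ∨ ψ.stateOccurs v s
  | disj φ ψ => φ.stateOccurs v s ∨ ψ.stateOccurs v s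

/-- An NNF only negates states (literals). -/
def isNNF : DForm V σ → Prop
  | top => True
  | bot => True
  | state _ _ => True
  | neg (state _ _) => True
  | neg _ => False
  | conj φ ψ => φ.isNNF ∧ ψ.isNNF
  | disj φ ψ => φ.isNNF ∧ ψ.isNNF

/-- A positive NNF contains no negation at all. -/
def isPositive : DForm V σ → Prop
  | top => True
  | bot => True
  | state _ _ => True
  | neg _ => False
  | conj φ ψ => φ.isPositive ∧ ψ.isPositive
  | disj φ ψ => φ.isPositive ∧ ψ.isPositive

/-- A monotone NNF is positive and has at most one state per variable. -/
def monotone (Δ : DForm V σ) : Prop :=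
  Δ.isPositive ∧ ∀ (v : V) (s t : σ v), Δ.stateOccurs v s → Δ.stateOccurs v t → s = t

/-- ∨-decomposability: disjuncts of every disjunction share no variables. -/
def orDecomposable : DForm V σ → Prop
  | top => True
  | bot => True
  | state _ _ => True
  | neg φ => φ.orDecomposable
  | conj φ ψ => φ.orDecomposable ∧ ψ.orDecomposable
  | disj φ ψ => φ.vars ∩ ψ.vars = ∅ ∧ φ.orDecomposable ∧ ψ.orDecomposable

/-- ∧-decomposability: conjuncts of every conjunction share no variables. -/
def andDecomposable : DForm V σ → Prop
  | top => True
  | bot => True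
  | state _ _ => True
  | neg φ => φ.andDecomposable
  | conj φ ψ => φ.vars ∩ ψ.vars = ∅ ∧ φ.andDecomposable ∧ ψ.andDecomposable
  | disj φ ψ => φ.andDecomposable ∧ ψ.andDecomposable

end DForm

variable {V : Type} {σ : V → Type}

/-- The complete reason `∀δ·Δ` for the decision on instance `δ`: universally
quantify every state of the instance `δ` from `Δ`. -/
noncomputable def completeReason [DecidableEq V] [Fintype V]
    [∀ v, DecidableEq (σ v)] [∀ v, Fintype (σ v)]
    (δ : ∀ u, σ u) (Δ : DForm V σ) : DForm V σ :=
  (Finset.univ : Finset V).toList.foldr (fun v acc => DForm.quant v (δ v) acc) Δ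


section Aux
variable [DecidableEq V] [∀ v, DecidableEq (σ v)] [∀ v, Fintype (σ v)]

open DForm

lemma cond_eval (v : V) (s : σ v) (Δ : DForm V σ) (w : ∀ u, σ u) :
    (Δ.cond v s).eval w = Δ.eval (Function.update w v s) := by
  induction Δ with
  | top => rfl
  | bot => rfl
  | state u t =>
      by_cases h : u = v
      · subst h
        simp [DForm.cond, DForm.eval, Function.update_self]
        by_cases ht : t = s
        · simp [ht, DForm.eval]
        · simp [ht, DForm.eval, Ne.symm ht]
      · simp [DForm.cond, h, DForm.eval, Function.update_of_ne h]
  | neg φ ih => simp [DForm.cond, DForm.eval, ih]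
  | conj φ ψ ih1 ih2 => simp [DForm.cond, DForm.eval, ih1, ih2]
  | disj φ ψ ih1 ih2 => simp [DForm.cond, DForm.eval, ih1, ih2]

lemma foldr_conj_eval (v : V) (s : σ v) (Δ : DForm V σ) (base : DForm V σ)
    (l : List (σ v)) (w : ∀ u, σ u) :
    ((l.foldr (fun j acc => DForm.conj (DForm.disj (DForm.state v s) (Δ.cond v j)) acc)
      base).eval w = true) ↔
      base.eval w = true ∧
        ∀ j ∈ l, w v = s ∨ (Δ.cond v j).eval w = true := by
  induction l with
  | nil => simp
  | cons j l ih =>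
      simp [DForm.eval, ih]
      tauto

lemma quant_eval (v : V) (s : σ v) (Δ : DForm V σ) (w : ∀ u, σ u) :
    ((DForm.quant v s Δ).eval w = true) ↔
      ∀ t : σ v, (w v = s → t = s) → Δ.eval (Function.update w v t) = true := by
  rw [DForm.quant, foldr_conj_eval]
  simp only [cond_eval, Finset.mem_toList, Finset.mem_filter, Finset.mem_univ, true_and]
  constructor
  · rintro ⟨h1, h2⟩ t ht
    by_cases hw : w v = s
    · have := ht hw; subst this; exact h1
    · by_cases hts : t = s
      · subst hts; exact h1
      · rcases h2 t hts with h | h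
        · exact absurd h hw
        · exact h
  · intro h
    refine ⟨h s (fun _ => rfl), fun j hj => ?_⟩
    by_cases hw : w v = s
    · exact Or.inl hw
    · exact Or.inr (h j (fun hh => absurd hh hw))

lemma foldr_quant_eval (δ : ∀ u, σ u) (Δ : DForm V σ) (L : List V) (hnd : L.Nodup)
    (w : ∀ u, σ u) :
    ((L.foldr (fun v acc => DForm.quant v (δ v) acc) Δ).eval w = true) ↔
      ∀ w' : ∀ u, σ u,
        (∀ u ∈ L, w u = δ u → w' u = δ u) → (∀ u ∉ L, w' u = w u) →
          Δ.eval w' = true := by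
  induction L generalizing w with
  | nil =>
      simp only [List.foldr_nil, List.not_mem_nil]
      constructor
      · intro h w' _ hw'
        have : w' = w := funext fun u => hw' u (by simp)
        rw [this]; exact h
      · intro h; exact h w (by simp) (fun u _ => rfl)
  | cons v L ih =>
      have hv : v ∉ L := (List.nodup_cons.mp hnd).1
      have hnd' : L.Nodup := (List.nodup_cons.mp hnd).2
      simp only [List.foldr_cons]
      rw [quant_eval]
      constructor
      · intro h w' h1 h2
        have hcond : w v = δ v → w' v = δ v := h1 v (List.mem_cons_self (a := v) (l := L))
        have ht : Function.update w v (w' v) v = w' v := Function.update_self _ _ _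
        have := (ih hnd' (Function.update w v (w' v))).mp (h (w' v) hcond)
        apply this w'
        · intro u hu
          have huv : u ≠ v := fun he => hv (he ▸ hu)
          rw [Function.update_of_ne huv]
          exact h1 u (List.mem_cons_of_mem _ hu)
        · intro u hu
          by_cases huv : u = v
          · subst huv; rw [Function.update_self]
          · rw [Function.update_of_ne huv]
            exact h2 u (fun hm => by
              rcases List.mem_cons.mp hm with h' | h'
              · exact huv h'
              · exact hu h')
      · intro h t hcond
        rw [ih hnd']
        intro w' h1 h2
        have hw'v : w' v = t := by
          rw [h2 v hv, Function.update_self]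
        apply h w'
        · intro u hu
          rcases List.mem_cons.mp hu with h' | h'
          · subst h'
            intro hwv
            rw [hw'v]
            exact hcond hwv
          · intro hwu
            have huv : u ≠ v := fun he => hv (he ▸ h')
            exact h1 u h' (by rwa [Function.update_of_ne huv] )
        · intro u hu
          have huv : u ≠ v := fun he => hu (he ▸ List.mem_cons_self (a := v) (l := L))
          have huL : u ∉ L := fun hm => hu (List.mem_cons_of_mem _ hm)
          rw [h2 u huL, Function.update_of_ne huv]

end Aux

/-- An instance `δ*` satisfies the complete reason `∀δ·Δ` iff `δ*` is congruent
to `δ`, i.e. iff the common characteristics `δ ∩ δ*` imply `Δ`. -/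
theorem completeReason_congruent [DecidableEq V] [Fintype V]
    [∀ v, DecidableEq (σ v)] [∀ v, Fintype (σ v)]
    (Δ : DForm V σ) (δ : ∀ u, σ u) (hδ : Δ.eval δ = true) (δs : ∀ u, σ u) :
    (completeReason δ Δ).eval δs = true ↔
      (∀ w : ∀ u, σ u, (∀ v : V, δ v = δs v → w v = δ v) → Δ.eval w = true) := by
  rw [completeReason, foldr_quant_eval δ Δ _ (Finset.univ : Finset V).nodup_toList]
  constructor
  · intro h w hw
    apply h w
    · intro u _ hu; exact hw u hu.symm
    · intro u hu; exact absurd (by simp : u ∈ Finset.univ.toList) hu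
  · intro h w' h1 _
    exact h w' fun u hu => h1 u (by simp) hu.symm
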